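/- Let λ ∈ ℝ, R > 0 with 3R² > λ, and let a : [0,∞) → ℝ be any function. Suppose r₁, r₂ : [0,∞) → ℝ are differentiable, satisfy rᵢ'(t) = λ rᵢ(t) − rᵢ(t)³ + a(t) and rᵢ(t) ≥ R for all t ≥ 0 (i = 1, 2), and r₂(0) ≤ r₁(0). Then for all t ≥ 0, 0 ≤ r₁(t) − r₂(t) ≤ (r₁(0) − r₂(0))·e^{(λ − 3R²)t}; in particular r₁(t) − r₂(t) → 0 as t → ∞. -/

import Mathlib

open Real Filter Set

/-- Contraction estimate: two solutions of the forced radial equation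
`ṙ = λr − r³ + a(t)` with the same forcing, confined to radii `≥ R` with
`3R² > λ`, converge together exponentially:
`0 ≤ r₁(t) − r₂(t) ≤ (r₁(0) − r₂(0))·e^{(λ−3R²)t}`, hence the difference
tends to `0`. -/
theorem forced_radial_contraction (lam R : ℝ) (hR : 0 < R) (hRlam : lam < 3 * R ^ 2)
    (a r₁ r₂ : ℝ → ℝ)
    (hr₁ : ∀ t, 0 ≤ t → HasDerivAt r₁ (lam * r₁ t - (r₁ t) ^ 3 + a t) t)
    (hr₂ : ∀ t, 0 ≤ t → HasDerivAt r₂ (lam * r₂ t - (r₂ t) ^ 3 + a t) t)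
    (hge₁ : ∀ t, 0 ≤ t → R ≤ r₁ t) (hge₂ : ∀ t, 0 ≤ t → R ≤ r₂ t)
    (h0 : r₂ 0 ≤ r₁ 0) :
    (∀ t, 0 ≤ t → 0 ≤ r₁ t - r₂ t ∧
        r₁ t - r₂ t ≤ (r₁ 0 - r₂ 0) * Real.exp ((lam - 3 * R ^ 2) * t)) ∧
      Filter.Tendsto (fun t => r₁ t - r₂ t) Filter.atTop (nhds 0) := by
  set K : ℝ := lam - 3 * R ^ 2 with hKdef
  have hKneg : K < 0 := by simp [hKdef]; linarith
  set u : ℝ → ℝ := fun t => r₁ t - r₂ t with hudef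
  set c : ℝ → ℝ := fun t => lam - ((r₁ t) ^ 2 + r₁ t * r₂ t + (r₂ t) ^ 2) with hcdef
  have hud : ∀ t, 0 ≤ t → HasDerivAt u (c t * u t) t := by
    intro t ht
    have h := (hr₁ t ht).sub (hr₂ t ht)
    refine h.congr_deriv ?_
    simp only [hudef, hcdef]
    ring
  have hcK : ∀ t, 0 ≤ t → c t ≤ K := by
    intro t ht
    have h1 := hge₁ t ht
    have h2 := hge₂ t ht
    simp only [hcdef, hKdef]
    nlinarith [hR.le]
  have hcontu : ∀ t, 0 ≤ t → ContinuousOn u (Icc 0 t) :=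
    fun t _ s hs => ((hud s hs.1).continuousAt).continuousWithinAt
  -- nonnegativity of u on [0, ∞)
  have hnn : ∀ t, 0 ≤ t → 0 ≤ u t := by
    intro t₀ ht₀
    by_contra hlt
    push_neg at hlt
    have hcu := hcontu t₀ ht₀
    -- a zero of u in [0, t₀]
    have hzero : (0 : ℝ) ∈ u '' Icc 0 t₀ := by
      apply intermediate_value_Icc' ht₀ hcu
      constructor
      · exact hlt.le
      · simp only [hudef]; linarith
    obtain ⟨s, hs, hus⟩ := hzero
    -- bound on c on [0, t₀]
    have hcc : ContinuousOn c (Icc 0 t₀) := by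
      have h1 : ContinuousOn r₁ (Icc 0 t₀) :=
        fun x hx => ((hr₁ x hx.1).continuousAt).continuousWithinAt
      have h2 : ContinuousOn r₂ (Icc 0 t₀) :=
        fun x hx => ((hr₂ x hx.1).continuousAt).continuousWithinAt
      simp only [hcdef]
      exact continuousOn_const.sub (((h1.pow 2).add (h1.mul h2)).add (h2.pow 2))
    obtain ⟨M, hM⟩ := isCompact_Icc.exists_bound_of_continuousOn hcc
    have key := norm_le_gronwallBound_of_norm_deriv_right_le
      (f := u) (f' := fun t => c t * u t) (a := s) (b := t₀) (δ := 0) (K := M) (ε := 0)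
      (hcu.mono (Icc_subset_Icc hs.1 le_rfl))
      (fun x hx => (hud x (le_trans hs.1 hx.1)).hasDerivWithinAt)
      (by simp [hus])
      (fun x hx => by
        have hx0 : x ∈ Icc 0 t₀ := ⟨le_trans hs.1 hx.1, hx.2.le⟩
        rw [norm_mul]
        have h := mul_le_mul_of_nonneg_right (hM x hx0) (norm_nonneg (u x))
        linarith)
    have h := key t₀ ⟨hs.2, le_rfl⟩
    rw [gronwallBound_ε0] at h
    simp at h
    rw [h] at hlt
    exact absurd hlt (lt_irrefl 0)
  -- upper bound via monotonicity of g t = u t * exp (-K t)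
  set g : ℝ → ℝ := fun t => u t * Real.exp (-K * t) with hgdef
  have hgd : ∀ t, 0 ≤ t →
      HasDerivAt g ((c t - K) * u t * Real.exp (-K * t)) t := by
    intro t ht
    have h1 : HasDerivAt (fun t => Real.exp (-K * t)) (-K * Real.exp (-K * t)) t := by
      have := (Real.hasDerivAt_exp (-K * t)).comp t ((hasDerivAt_id t).const_mul (-K))
      refine this.congr_deriv ?_
      ring
    have := (hud t ht).mul h1
    refine this.congr_deriv ?_
    ring
  have hanti : AntitoneOn g (Ici 0) := by
    apply antitoneOn_of_deriv_nonpos (convex_Ici 0)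
    · exact fun x hx => ((hgd x hx).continuousAt).continuousWithinAt
    · intro x hx
      rw [interior_Ici] at hx
      exact ((hgd x hx.le).differentiableAt).differentiableWithinAt
    · intro x hx
      rw [interior_Ici] at hx
      rw [(hgd x hx.le).deriv]
      have h1 : c x - K ≤ 0 := by linarith [hcK x hx.le]
      have h2 : 0 ≤ u x := hnn x hx.le
      have h3 : 0 < Real.exp (-K * x) := Real.exp_pos _
      have h4 : (c x - K) * u x ≤ 0 := mul_nonpos_of_nonpos_of_nonneg h1 h2
      nlinarith [mul_nonneg h2 h3.le]
  have hub : ∀ t, 0 ≤ t → u t ≤ u 0 * Real.exp (K * t) := by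
    intro t ht
    have := hanti (self_mem_Ici) ht ht
    simp only [hgdef, mul_zero, Real.exp_zero, mul_one] at this
    have hpos : 0 < Real.exp (-K * t) := Real.exp_pos _
    rw [show K * t = -(-K * t) by ring, Real.exp_neg, ← div_eq_mul_inv, le_div_iff₀ hpos]
    exact this
  have hmain : ∀ t, 0 ≤ t → 0 ≤ u t ∧ u t ≤ u 0 * Real.exp (K * t) :=
    fun t ht => ⟨hnn t ht, hub t ht⟩
  refine ⟨fun t ht => hmain t ht, ?_⟩
  -- tendsto 0
  have hg0 : Tendsto (fun t => u 0 * Real.exp (K * t)) atTop (nhds 0) := by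
    have h1' : Tendsto (fun t : ℝ => (-K) * t) atTop atTop :=
      tendsto_id.const_mul_atTop (neg_pos.2 hKneg)
    have h1 : Tendsto (fun t : ℝ => K * t) atTop atBot := by
      have := tendsto_neg_atTop_atBot.comp h1'
      simpa only [Function.comp_def, neg_mul, neg_neg] using this
    have h2 : Tendsto (fun t : ℝ => Real.exp (K * t)) atTop (nhds 0) :=
      Real.tendsto_exp_atBot.comp h1
    simpa using h2.const_mul (u 0)
  apply squeeze_zero' (eventually_atTop.2 ⟨0, fun t ht => (hmain t ht).1⟩)
    (eventually_atTop.2 ⟨0, fun t ht => (hmain t ht).2⟩) hg0
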